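/- Let X be the space of bounded continuous real functions on [0,∞) with sup norm, {t_n} ⊆ (0,∞) with t_n → ∞ and t_{n+1}/t_n → 1, and μ_n(a) = (1/t_n) ∫_0^{t_n} a(t) dt. Then ‖μ_n − μ_{n+1}‖ → 0 in the dual norm; in fact ‖μ_n − μ_{n+1}‖ ≤ 2 − 2·min{t_n, t_{n+1}}/max{t_n, t_{n+1}} for all n. -/

import Mathlib

open Filter

/-- The mean `μ_r(a) = (1/r) ∫_0^r a(t) dt` on bounded continuous functions
on `[0,∞)`. -/
noncomputable def tmean (r : ℝ) (a : ℝ → ℝ) : ℝ :=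
  (1 / r) * ∫ t in (0 : ℝ)..r, a t

lemma tmean_key {r s : ℝ} (hr : 0 < r) (hrs : r ≤ s) {a : ℝ → ℝ}
    (ha : ContinuousOn a (Set.Ici 0)) (hb : ∀ x ∈ Set.Ici (0 : ℝ), |a x| ≤ 1) :
    |tmean r a - tmean s a| ≤ 2 - 2 * r / s := by
  have hs : 0 < s := hr.trans_le hrs
  have integ : ∀ u v : ℝ, 0 ≤ u → 0 ≤ v →
      IntervalIntegrable a MeasureTheory.volume u v := fun u v hu hv =>
    (ha.mono (fun x hx => le_trans (le_min hu hv) hx.1)).intervalIntegrable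
  have habs : ∀ u v : ℝ, 0 ≤ u → 0 ≤ v → |∫ τ in u..v, a τ| ≤ |v - u| := by
    intro u v hu hv
    have h := intervalIntegral.norm_integral_le_of_norm_le_const
      (C := 1) (f := a) (a := u) (b := v) ?_
    · simpa using h
    · intro x hx
      exact hb x ((le_min hu hv).trans hx.1.le)
  have hsplit : tmean r a - tmean s a =
      (1 / r - 1 / s) * (∫ τ in (0 : ℝ)..r, a τ) - (1 / s) * ∫ τ in r..s, a τ := by
    unfold tmean
    have h1 : (∫ τ in (0 : ℝ)..s, a τ) =
        (∫ τ in (0 : ℝ)..r, a τ) + ∫ τ in r..s, a τ :=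
      (intervalIntegral.integral_add_adjacent_intervals
        (integ 0 r le_rfl hr.le) (integ r s hr.le hs.le)).symm
    rw [h1]; ring
  rw [hsplit]
  have h1 : |(1 / r - 1 / s) * ∫ τ in (0 : ℝ)..r, a τ| ≤ (1 / r - 1 / s) * r := by
    rw [abs_mul]
    have hnn : (0 : ℝ) ≤ 1 / r - 1 / s :=
      sub_nonneg.mpr (one_div_le_one_div_of_le hr hrs)
    rw [abs_of_nonneg hnn]
    have := habs 0 r le_rfl hr.le
    refine mul_le_mul_of_nonneg_left ?_ hnn
    simpa [abs_of_nonneg hr.le] using this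
  have h2 : |(1 / s) * ∫ τ in r..s, a τ| ≤ (1 / s) * (s - r) := by
    rw [abs_mul]
    rw [abs_of_nonneg (by positivity : (0:ℝ) ≤ 1 / s)]
    have := habs r s hr.le hs.le
    refine mul_le_mul_of_nonneg_left ?_ (by positivity)
    simpa [abs_of_nonneg (sub_nonneg.mpr hrs)] using this
  calc |(1 / r - 1 / s) * (∫ τ in (0 : ℝ)..r, a τ) - (1 / s) * ∫ τ in r..s, a τ|
      ≤ |(1 / r - 1 / s) * ∫ τ in (0 : ℝ)..r, a τ| + |(1 / s) * ∫ τ in r..s, a τ| :=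
        abs_sub _ _
    _ ≤ (1 / r - 1 / s) * r + (1 / s) * (s - r) := add_le_add h1 h2
    _ = 2 - 2 * r / s := by field_simp; ring

theorem stmt15 (t : ℕ → ℝ) (ht0 : ∀ n, 0 < t n)
    (htinf : Tendsto t atTop atTop)
    (hratio : Tendsto (fun n => t (n + 1) / t n) atTop (nhds 1)) :
    (∀ n : ℕ,
      (⨆ a : {a : ℝ → ℝ // ContinuousOn a (Set.Ici 0) ∧
          ∀ x ∈ Set.Ici (0 : ℝ), |a x| ≤ 1},
        |tmean (t n) a.1 - tmean (t (n + 1)) a.1|)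
        ≤ 2 - 2 * min (t n) (t (n + 1)) / max (t n) (t (n + 1))) ∧
    Tendsto (fun n =>
        ⨆ a : {a : ℝ → ℝ // ContinuousOn a (Set.Ici 0) ∧
            ∀ x ∈ Set.Ici (0 : ℝ), |a x| ≤ 1},
          |tmean (t n) a.1 - tmean (t (n + 1)) a.1|)
      atTop (nhds 0) := by
  have hne : Nonempty {a : ℝ → ℝ // ContinuousOn a (Set.Ici 0) ∧
      ∀ x ∈ Set.Ici (0 : ℝ), |a x| ≤ 1} :=
    ⟨⟨fun _ => 0, continuousOn_const, fun x _ => by simp⟩⟩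
  have hbound : ∀ n : ℕ, ∀ a : {a : ℝ → ℝ // ContinuousOn a (Set.Ici 0) ∧
      ∀ x ∈ Set.Ici (0 : ℝ), |a x| ≤ 1},
      |tmean (t n) a.1 - tmean (t (n + 1)) a.1|
        ≤ 2 - 2 * min (t n) (t (n + 1)) / max (t n) (t (n + 1)) := by
    intro n a
    rcases le_total (t n) (t (n + 1)) with h | h
    · rw [min_eq_left h, max_eq_right h]
      exact tmean_key (ht0 n) h a.2.1 a.2.2
    · rw [min_eq_right h, max_eq_left h, abs_sub_comm]
      exact tmean_key (ht0 (n + 1)) h a.2.1 a.2.2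
  have hsup : ∀ n : ℕ,
      (⨆ a : {a : ℝ → ℝ // ContinuousOn a (Set.Ici 0) ∧
          ∀ x ∈ Set.Ici (0 : ℝ), |a x| ≤ 1},
        |tmean (t n) a.1 - tmean (t (n + 1)) a.1|)
        ≤ 2 - 2 * min (t n) (t (n + 1)) / max (t n) (t (n + 1)) :=
    fun n => ciSup_le (hbound n)
  refine ⟨hsup, ?_⟩
  have hnonneg : ∀ n : ℕ, 0 ≤
      (⨆ a : {a : ℝ → ℝ // ContinuousOn a (Set.Ici 0) ∧
          ∀ x ∈ Set.Ici (0 : ℝ), |a x| ≤ 1},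
        |tmean (t n) a.1 - tmean (t (n + 1)) a.1|) := by
    intro n
    have hbdd : BddAbove (Set.range fun a : {a : ℝ → ℝ // ContinuousOn a (Set.Ici 0) ∧
        ∀ x ∈ Set.Ici (0 : ℝ), |a x| ≤ 1} =>
        |tmean (t n) a.1 - tmean (t (n + 1)) a.1|) :=
      ⟨_, Set.forall_mem_range.mpr (hbound n)⟩
    have := le_ciSup hbdd (Classical.arbitrary _)
    exact le_trans (abs_nonneg _) this
  have hq : Tendsto (fun n => min (t n) (t (n + 1)) / max (t n) (t (n + 1)))
      atTop (nhds 1) := by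
    have h1 : Tendsto (fun n => min 1 (t (n + 1) / t n)) atTop (nhds (min 1 1)) :=
      tendsto_const_nhds.min hratio
    have h2 : Tendsto (fun n => max 1 (t (n + 1) / t n)) atTop (nhds (max 1 1)) :=
      tendsto_const_nhds.max hratio
    have h3 := h1.div h2 (by simp)
    have heq : ∀ n, min (t n) (t (n + 1)) / max (t n) (t (n + 1))
        = min 1 (t (n + 1) / t n) / max 1 (t (n + 1) / t n) := by
      intro n
      rcases le_total (t n) (t (n + 1)) with h | h
      · have h1' : (1 : ℝ) ≤ t (n + 1) / t n := (one_le_div (ht0 n)).mpr h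
        rw [min_eq_left h, max_eq_right h, min_eq_left h1', max_eq_right h1',
          one_div_div]
      · have h1' : t (n + 1) / t n ≤ 1 := (div_le_one (ht0 n)).mpr h
        rw [min_eq_right h, max_eq_left h, min_eq_right h1', max_eq_left h1',
          div_one]
    simpa [heq, Pi.div_def] using h3
  have hb0 : Tendsto (fun n => 2 - 2 * min (t n) (t (n + 1)) / max (t n) (t (n + 1)))
      atTop (nhds 0) := by
    have h2 : Tendsto (fun _ : ℕ => (2:ℝ)) atTop (nhds 2) := tendsto_const_nhds
    have := h2.sub (h2.mul hq)
    simpa [mul_div_assoc] using this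
  exact squeeze_zero hnonneg hsup hb0
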